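/- Let C be a set and H_k := ℓ²(C^k). For h ∈ H_k^{S_k} and c₁,…,c_l ∈ C with l ≤ k, let h(c₁,…,c_l) ∈ H_{k−l} denote the slice (c_{l+1},…,c_k) ↦ h(c₁,…,c_k). Let k₁,…,k_n ∈ ℕ, let h_i ∈ H_{k_i}^{S_{k_i}} for i = 1,…,n, and let F = ([n], E) be a (loopless) graph with deg(i) ≤ k_i for each i. Then Σ_{φ:E→C} ∏_{v∈[n]} ‖h_v(φ(δ(v)))‖ ≤ ∏_{v∈[n]} ‖h_v‖, where δ(v) is the tuple of edges incident with v and ‖h_v(φ(δ(v)))‖ is the ℓ²(C^{k_v−deg(v)})-norm of the slice obtained by substituting the colours φ assigns to the edges at v. -/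

import Mathlib

noncomputable section

abbrev Hk (C : Type) (k : ℕ) : Type := lp (fun _ : (Fin k → C) => ℝ) 2

def SkInv {C : Type} {k : ℕ} (h : Hk C k) : Prop :=
  ∀ (σ : Equiv.Perm (Fin k)) (c : Fin k → C), h (c ∘ σ) = h c

def splice {C : Type} {k l : ℕ} (hl : l ≤ k) (a : Fin l → C) (b : Fin (k - l) → C) :
    Fin k → C :=
  fun i => if h : (i : ℕ) < l then a ⟨i, h⟩
    else b ⟨(i : ℕ) - l, by have := i.isLt; omega⟩

def sliceNorm {C : Type} {k : ℕ} (h : Hk C k) {l : ℕ} (hl : l ≤ k) (a : Fin l → C) : ℝ :=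
  Real.sqrt (∑' b : Fin (k - l) → C, (h (splice hl a b)) ^ 2)

open scoped ENNReal

namespace Stmt10

variable {C : Type}

/-- append one element at the end -/
def app1 {l : ℕ} (a : Fin l → C) (c : C) : Fin (l + 1) → C :=
  fun j => if h : (j : ℕ) < l then a ⟨j, h⟩ else c

def Q {k : ℕ} (h : Hk C k) {l : ℕ} (hl : l ≤ k) (a : Fin l → C) : ℝ≥0∞ :=
  ∑' b : Fin (k - l) → C, ENNReal.ofReal ((h (splice hl a b)) ^ 2)

lemma summable_sq {k : ℕ} (h : Hk C k) :
    Summable (fun x : Fin k → C => (h x) ^ 2) := by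
  have := (lp.memℓp h).summable (by norm_num : 0 < (2 : ℝ≥0∞).toReal)
  refine this.congr fun x => ?_
  have h2 : ‖(h : ∀ _, ℝ) x‖ ^ ((2 : ℝ≥0∞)).toReal = ‖(h : ∀ _, ℝ) x‖ ^ (2 : ℕ) := by
    rw [show ((2 : ℝ≥0∞)).toReal = ((2 : ℕ) : ℝ) by norm_num, Real.rpow_natCast]
  rw [h2]
  simp [sq_abs, Real.norm_eq_abs]

lemma splice_injective {k l : ℕ} (hl : l ≤ k) (a : Fin l → C) :
    Function.Injective (splice (C := C) hl a) := by
  intro b b' hb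
  funext j
  have hj : l + (j : ℕ) < k := by have := j.isLt; omega
  have := congrFun hb ⟨l + j, hj⟩
  simp only [splice] at this
  rw [dif_neg (by omega), dif_neg (by omega)] at this
  simpa [Nat.add_sub_cancel_left] using this

lemma summable_slice {k : ℕ} (h : Hk C k) {l : ℕ} (hl : l ≤ k) (a : Fin l → C) :
    Summable (fun b : Fin (k - l) → C => (h (splice hl a b)) ^ 2) :=
  (summable_sq h).comp_injective (splice_injective hl a)

lemma Q_eq (h : Hk C k) {l : ℕ} (hl : l ≤ k) (a : Fin l → C) :
    Q h hl a = ENNReal.ofReal (sliceNorm h hl a ^ 2) := by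
  rw [sliceNorm, Real.sq_sqrt (tsum_nonneg fun b => sq_nonneg _)]
  rw [ENNReal.ofReal_tsum_of_nonneg (fun b => sq_nonneg _) (summable_slice h hl a)]
  rfl


def extendPerm {k l : ℕ} (hl : l ≤ k) (σ : Equiv.Perm (Fin l)) : Equiv.Perm (Fin k) where
  toFun i := if h : (i : ℕ) < l then ⟨σ ⟨i, h⟩, lt_of_lt_of_le (σ ⟨i, h⟩).isLt hl⟩ else i
  invFun i := if h : (i : ℕ) < l then ⟨σ.symm ⟨i, h⟩, lt_of_lt_of_le (σ.symm ⟨i, h⟩).isLt hl⟩ else i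
  left_inv i := by
    by_cases h : (i : ℕ) < l
    · simp [h]
    · simp [h]
  right_inv i := by
    by_cases h : (i : ℕ) < l
    · simp [h]
    · simp [h]

lemma Q_perm {k : ℕ} {h : Hk C k} (hi : SkInv h) {l : ℕ} (hl : l ≤ k)
    (σ : Equiv.Perm (Fin l)) (a : Fin l → C) :
    Q h hl (a ∘ σ) = Q h hl a := by
  unfold Q
  refine tsum_congr fun b => ?_
  congr 1
  have key : splice hl (a ∘ σ) b = (splice hl a b) ∘ (extendPerm hl σ) := by
    funext i
    by_cases hil : (i : ℕ) < l
    · simp [splice, extendPerm, hil]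
    · simp [splice, extendPerm, hil]
  rw [key, hi (extendPerm hl σ) (splice hl a b)]

lemma Q_reindex {k : ℕ} {h : Hk C k} (hi : SkInv h) {l l' : ℕ} (τ : Fin l ≃ Fin l')
    (hl : l ≤ k) (hl' : l' ≤ k) (a : Fin l' → C) :
    Q h hl (a ∘ τ) = Q h hl' a := by
  have e : l = l' := Fin.equiv_iff_eq.mp ⟨τ⟩
  subst e
  exact Q_perm hi hl' τ a

lemma Q_app1 {k : ℕ} (h : Hk C k) {l : ℕ} (hl1 : l + 1 ≤ k) (hl : l ≤ k) (a : Fin l → C) :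
    ∑' c : C, Q h hl1 (app1 a c) = Q h hl a := by
  have hsub : k - l = (k - l - 1) + 1 := by omega
  let e3 : C × (Fin (k - l - 1) → C) ≃ (Fin (k - l) → C) :=
  { toFun := fun p i => if h : (i : ℕ) = 0 then p.1 else p.2 ⟨(i : ℕ) - 1, by have := i.isLt; omega⟩
    invFun := fun b => (b ⟨0, by omega⟩, fun j => b ⟨(j : ℕ) + 1, by have := j.isLt; omega⟩)
    left_inv := by
      rintro ⟨c, b⟩
      refine Prod.ext ?_ ?_
      · simp
      · funext j
        simp only
        rw [dif_neg (by simp)]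
        exact congrArg b (Fin.ext (by simp))
    right_inv := by
      intro b
      funext i
      by_cases h0 : (i : ℕ) = 0
      · simp only [dif_pos h0]
        congr 1
        exact (Fin.ext h0.symm)
      · simp only [dif_neg h0]
        congr 1
        exact Fin.ext (by simp; omega) }

  have key : ∀ (c : C) (b : Fin (k - l - 1) → C),
      splice hl a (e3 (c, b)) = splice hl1 (app1 a c) b := by
    intro c b
    funext i
    by_cases hil : (i : ℕ) < l
    · simp only [splice, dif_pos hil, dif_pos (by omega : (i : ℕ) < l + 1), app1]
    · by_cases hil1 : (i : ℕ) < l + 1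
      · have hieq : (i : ℕ) = l := by omega
        simp only [splice, dif_neg hil, dif_pos hil1, app1, e3, Equiv.coe_fn_mk]
        rw [dif_pos (show (i : ℕ) - l = 0 by omega)]
      · simp only [splice, dif_neg hil, dif_neg hil1, app1, e3, Equiv.coe_fn_mk]
        rw [dif_neg (show ¬ ((i : ℕ) - l = 0) by omega)]
        exact congrArg b (Fin.ext (by simp; omega))
  calc ∑' c : C, Q h hl1 (app1 a c)
      = ∑' (c : C) (b : Fin (k - l - 1) → C),
          ENNReal.ofReal ((h (splice hl a (e3 (c, b)))) ^ 2) := by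
        refine tsum_congr fun c => tsum_congr fun b => ?_
        rw [key c b]
    _ = ∑' p : C × (Fin (k - l - 1) → C),
          ENNReal.ofReal ((h (splice hl a (e3 p))) ^ 2) :=
        (ENNReal.tsum_prod' (f := fun p => ENNReal.ofReal ((h (splice hl a (e3 p))) ^ 2))).symm
    _ = Q h hl a := by
        unfold Q
        exact e3.tsum_eq (fun b => ENNReal.ofReal ((h (splice hl a b)) ^ 2))

lemma Q_zero {k : ℕ} (h : Hk C k) {l : ℕ} (hl : l ≤ k) (a : Fin l → C) (h0 : l = 0) :
    Q h hl a = ENNReal.ofReal (‖h‖ ^ 2) := by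
  subst h0
  have hb : ∀ b : Fin (k - 0) → C, splice hl a b = b := by
    intro b
    funext i
    simp only [splice]
    rw [dif_neg (by omega)]
    exact congrArg b (Fin.ext (Nat.sub_zero _))
  have hnorm : ‖h‖ ^ (2 : ℕ) = ∑' b : Fin k → C, (h b) ^ 2 := by
    have := lp.norm_rpow_eq_tsum (p := 2) (by norm_num) h
    rw [show ((2 : ℝ≥0∞)).toReal = ((2 : ℕ) : ℝ) by norm_num] at this
    simp only [Real.rpow_natCast] at this
    rw [this]
    refine tsum_congr fun b => ?_
    simp [sq_abs, Real.norm_eq_abs]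
  unfold Q
  rw [hnorm, ENNReal.ofReal_tsum_of_nonneg (fun b => sq_nonneg _) (summable_sq h)]
  exact tsum_congr fun b => by rw [hb b]


lemma tsum_mul_le_sqrt {α : Type} (f g : α → ℝ≥0∞) :
    ∑' c, f c * g c ≤ (∑' c, f c ^ 2) ^ (1/2 : ℝ) * (∑' c, g c ^ 2) ^ (1/2 : ℝ) := by
  letI : MeasurableSpace α := ⊤
  haveI : MeasurableSingletonClass α := ⟨fun _ => trivial⟩
  have hconj : (2 : ℝ).HolderConjugate 2 := Real.HolderConjugate.two_two
  have key := ENNReal.lintegral_mul_le_Lp_mul_Lq (μ := MeasureTheory.Measure.count)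
    hconj (measurable_from_top (f := f)).aemeasurable (measurable_from_top (f := g)).aemeasurable
  rw [MeasureTheory.lintegral_count, MeasureTheory.lintegral_count,
    MeasureTheory.lintegral_count] at key
  calc ∑' c, f c * g c = ∑' c, (f * g) c := by rfl
    _ ≤ (∑' c, f c ^ (2:ℝ)) ^ (1/(2:ℝ)) * (∑' c, g c ^ (2:ℝ)) ^ (1/(2:ℝ)) := key
    _ = (∑' c, f c ^ 2) ^ (1/2 : ℝ) * (∑' c, g c ^ 2) ^ (1/2 : ℝ) := by
        congr 1 <;> congr 1 <;> refine tsum_congr fun c => ?_ <;>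
          rw [show (2:ℝ) = ((2:ℕ):ℝ) by norm_num, ENNReal.rpow_natCast]


section Graph

variable {n : ℕ} {k : Fin n → ℕ} {E : Type} [Fintype E] [DecidableEq E]
set_option linter.unusedSectionVars false

/-- partial slice functional indexed by a finset of edges -/
def q (h : ∀ i : Fin n, Hk C (k i)) (v : Fin n) (t : Finset E) (htk : t.card ≤ k v)
    (φ : ↥t → C) : ℝ≥0∞ :=
  Q (h v) htk (fun i => φ (t.equivFin.symm i))

lemma q_congr (h : ∀ i : Fin n, Hk C (k i)) (v : Fin n) {t₁ t₂ : Finset E}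
    {h₁ : t₁.card ≤ k v} {h₂ : t₂.card ≤ k v} {φ₁ : ↥t₁ → C} {φ₂ : ↥t₂ → C}
    (ht : t₁ = t₂)
    (hφ : ∀ e (he₁ : e ∈ t₁) (he₂ : e ∈ t₂), φ₁ ⟨e, he₁⟩ = φ₂ ⟨e, he₂⟩) :
    q h v t₁ h₁ φ₁ = q h v t₂ h₂ φ₂ := by
  subst ht
  have : φ₁ = φ₂ := funext fun e => hφ e e.2 e.2
  rw [this]

/-- extend a partial assignment by one value -/
def extend {t : Finset E} {e₀ : E} (φ : ↥t → C) (c : C) : ↥(insert e₀ t) → C :=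
  fun e => if h : (e : E) = e₀ then c
    else φ ⟨e, (Finset.mem_insert.mp e.2).resolve_left h⟩

lemma q_extend (h : ∀ i : Fin n, Hk C (k i)) (v : Fin n) (hiv : SkInv (h v))
    {t : Finset E} {e₀ : E} (he₀ : e₀ ∉ t)
    (ht1 : (insert e₀ t).card ≤ k v) (ht : t.card ≤ k v) (φ : ↥t → C) :
    ∑' c : C, q h v (insert e₀ t) ht1 (extend φ c) = q h v t ht φ := by
  have hcard : (insert e₀ t).card = t.card + 1 := Finset.card_insert_of_notMem he₀
  have ht' : t.card + 1 ≤ k v := hcard ▸ ht1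
  let eOpt : ↥(insert e₀ t) ≃ Option ↥t :=
  { toFun := fun e => if h : (e : E) = e₀ then none
      else some ⟨e, (Finset.mem_insert.mp e.2).resolve_left h⟩
    invFun := fun o => o.elim ⟨e₀, Finset.mem_insert_self _ _⟩
      (fun x => ⟨(x : E), Finset.mem_insert_of_mem x.2⟩)
    left_inv := by
      rintro ⟨e, he⟩
      by_cases hh : e = e₀
      · subst hh; simp
      · simp [hh]
    right_inv := by
      rintro (_ | ⟨x, hx⟩)
      · simp
      · simp [show x ≠ e₀ from fun hh => he₀ (hh ▸ hx)] }
  let τ : Fin ((insert e₀ t).card) ≃ Fin (t.card + 1) :=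
    (((insert e₀ t).equivFin.symm.trans eOpt).trans (Equiv.optionCongr t.equivFin)).trans
      finSuccEquivLast.symm
  have claim : ∀ c : C,
      (fun i => extend φ c ((insert e₀ t).equivFin.symm i)) =
        (app1 (fun j => φ (t.equivFin.symm j)) c) ∘ τ := by
    intro c
    funext i
    set x := (insert e₀ t).equivFin.symm i with hx
    by_cases hxe : (x : E) = e₀
    · have h1 : eOpt x = none := by simp [eOpt, hxe]
      have h2 : τ i = Fin.last t.card := by
        simp only [τ, Equiv.trans_apply, ← hx, h1]
        simp
      simp only [Function.comp_apply, h2, extend, hxe, dif_pos]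
      simp [app1]
    · have h1 : eOpt x = some ⟨(x : E), (Finset.mem_insert.mp x.2).resolve_left hxe⟩ := by
        simp [eOpt, hxe]
      have h2 : τ i = Fin.castSucc (t.equivFin ⟨(x : E), (Finset.mem_insert.mp x.2).resolve_left hxe⟩) := by
        simp only [τ, Equiv.trans_apply, ← hx, h1]
        simp
      simp only [Function.comp_apply, h2, extend, hxe, dif_neg, not_false_iff]
      simp only [app1]
      rw [dif_pos (by exact (t.equivFin _).isLt)]
      congr 1
      simp
  calc ∑' c : C, q h v (insert e₀ t) ht1 (extend φ c)
      = ∑' c : C, Q (h v) ht' (app1 (fun j => φ (t.equivFin.symm j)) c) := by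
        refine tsum_congr fun c => ?_
        rw [q, claim c]
        exact Q_reindex hiv τ ht1 ht' _
    _ = Q (h v) ht (fun j => φ (t.equivFin.symm j)) := Q_app1 (h v) ht' ht _
    _ = q h v t ht φ := rfl


lemma main (h : ∀ i : Fin n, Hk C (k i)) (hinv : ∀ i, SkInv (h i))
    (ends : E → Sym2 (Fin n)) (hloopless : ∀ e, ¬(ends e).IsDiag)
    (I : Fin n → Finset E) (hI : ∀ v e, e ∈ I v ↔ v ∈ ends e)
    (hIk : ∀ v, (I v).card ≤ k v) (s : Finset E) :
    ∑' φ : (↥s → C), ∏ v : Fin n,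
        (q h v (I v ∩ s)
          (le_trans (Finset.card_le_card Finset.inter_subset_left) (hIk v))
          (fun e => φ ⟨(e : E), Finset.mem_of_mem_inter_right e.2⟩)) ^ (1/2 : ℝ)
      ≤ ∏ v : Fin n, ENNReal.ofReal (‖h v‖ ^ 2) ^ (1/2 : ℝ) := by
  induction s using Finset.cons_induction with
  | empty =>
    haveI : IsEmpty (↥(∅ : Finset E)) := by
      simp [Finset.isEmpty_coe_sort]
      exact ⟨fun x => x.2⟩
    rw [tsum_eq_single (default : ↥(∅ : Finset E) → C)
      (fun φ' h' => absurd (Subsingleton.elim φ' default) h')]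
    refine le_of_eq (Finset.prod_congr rfl fun v _ => ?_)
    rw [q, Q_zero _ _ _ (by simp)]
  | cons e₀ s' he₀ ih =>
    classical
    obtain ⟨u, w, huw⟩ : ∃ u w, ends e₀ = s(u, w) :=
      Sym2.ind (fun u w => ⟨u, w, rfl⟩) (ends e₀)
    have hne : u ≠ w := by
      intro hh
      exact hloopless e₀ (by rw [huw, hh]; exact Sym2.mk_isDiag_iff.mpr rfl)
    have hmem : ∀ v : Fin n, v ∈ ends e₀ ↔ v = u ∨ v = w := by
      intro v; rw [huw, Sym2.mem_iff]
    have hins : Finset.cons e₀ s' he₀ = insert e₀ s' := Finset.cons_eq_insert _ _ he₀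
    -- the equivalence on assignments
    let Φ : (↥(insert e₀ s') → C) ≃ (↥s' → C) × C :=
    { toFun := fun φ => (fun e => φ ⟨(e : E), Finset.mem_insert_of_mem e.2⟩,
        φ ⟨e₀, Finset.mem_insert_self _ _⟩)
      invFun := fun p => extend p.1 p.2
      left_inv := by
        intro φ
        funext e
        by_cases hh : (e : E) = e₀
        · simp only [extend, dif_pos hh]
          congr 1
          exact Subtype.ext hh.symm
        · simp [extend, hh]
      right_inv := by
        rintro ⟨φ', c⟩
        refine Prod.ext ?_ ?_
        · funext e
          have : (e : E) ≠ e₀ := fun hh => he₀ (hh ▸ e.2)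
          simp [extend, this]
        · simp [extend] }
    -- the three kinds of factors
    have hsub : ∀ v : Fin n, (I v ∩ s').card ≤ k v :=
      fun v => le_trans (Finset.card_le_card Finset.inter_subset_left) (hIk v)
    have hsub1 : ∀ v : Fin n, e₀ ∈ I v → (insert e₀ (I v ∩ s')).card ≤ k v := by
      intro v hv
      refine le_trans (Finset.card_le_card ?_) (hIk v)
      exact Finset.insert_subset hv Finset.inter_subset_left
    have he₀s' : e₀ ∉ s' := he₀
    have hu : e₀ ∈ I u := (hI u e₀).mpr (by rw [huw]; exact Sym2.mem_mk_left _ _)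
    have hw : e₀ ∈ I w := (hI w e₀).mpr (by rw [huw]; exact Sym2.mem_mk_right _ _)
    rw [hins]
    -- notation
    set G : Fin n → (↥s' → C) → ℝ≥0∞ := fun v φ' =>
      (q h v (I v ∩ s') (hsub v)
        (fun e => φ' ⟨(e : E), Finset.mem_of_mem_inter_right e.2⟩)) ^ (1/2 : ℝ) with hG
    set F : (↥(insert e₀ s') → C) → ℝ≥0∞ := fun φ =>
      ∏ v : Fin n, (q h v (I v ∩ insert e₀ s')
        (le_trans (Finset.card_le_card Finset.inter_subset_left) (hIk v))
        (fun e => φ ⟨(e : E), Finset.mem_of_mem_inter_right e.2⟩)) ^ (1/2 : ℝ) with hF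
    have key : ∀ φ' : ↥s' → C, ∑' c : C, F (extend φ' c) ≤ ∏ v : Fin n, G v φ' := by
      intro φ'
      -- the two variable factors
      set fu : C → ℝ≥0∞ := fun c =>
        (q h u (insert e₀ (I u ∩ s')) (hsub1 u hu)
          (extend (fun e => φ' ⟨(e : E), Finset.mem_of_mem_inter_right e.2⟩) c)) ^ (1/2:ℝ)
        with hfu
      set fw : C → ℝ≥0∞ := fun c =>
        (q h w (insert e₀ (I w ∩ s')) (hsub1 w hw)
          (extend (fun e => φ' ⟨(e : E), Finset.mem_of_mem_inter_right e.2⟩) c)) ^ (1/2:ℝ)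
        with hfw
      have hwmem : w ∈ Finset.univ.erase u :=
        Finset.mem_erase.mpr ⟨hne.symm, Finset.mem_univ _⟩
      set P : ℝ≥0∞ := ∏ v ∈ (Finset.univ.erase u).erase w, G v φ' with hP
      -- claim B instances
      have claimB : ∀ (v : Fin n) (hv : e₀ ∈ I v) (c : C),
          q h v (I v ∩ insert e₀ s')
            (le_trans (Finset.card_le_card Finset.inter_subset_left) (hIk v))
            (fun e => extend φ' c ⟨(e : E), Finset.mem_of_mem_inter_right e.2⟩)
          = q h v (insert e₀ (I v ∩ s')) (hsub1 v hv)
            (extend (fun e => φ' ⟨(e : E), Finset.mem_of_mem_inter_right e.2⟩) c) := by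
        intro v hv c
        refine q_congr h v ?_ ?_
        · ext e
          simp only [Finset.mem_inter, Finset.mem_insert]
          constructor
          · rintro ⟨h1, (rfl | h2)⟩
            · exact Or.inl rfl
            · exact Or.inr ⟨h1, h2⟩
          · rintro (rfl | ⟨h1, h2⟩)
            · exact ⟨hv, Or.inl rfl⟩
            · exact ⟨h1, Or.inr h2⟩
        · intro e he1 he2
          by_cases he : e = e₀ <;> simp [extend, he]
      have claimA : ∀ (v : Fin n), v ∉ ends e₀ → ∀ c : C,
          q h v (I v ∩ insert e₀ s')
            (le_trans (Finset.card_le_card Finset.inter_subset_left) (hIk v))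
            (fun e => extend φ' c ⟨(e : E), Finset.mem_of_mem_inter_right e.2⟩)
          = q h v (I v ∩ s') (hsub v)
            (fun e => φ' ⟨(e : E), Finset.mem_of_mem_inter_right e.2⟩) := by
        intro v hv c
        have hIv : e₀ ∉ I v := fun hh => hv ((hI v e₀).mp hh)
        refine q_congr h v ?_ ?_
        · ext e
          simp only [Finset.mem_inter, Finset.mem_insert]
          constructor
          · rintro ⟨h1, (rfl | h2)⟩
            · exact absurd h1 hIv
            · exact ⟨h1, h2⟩
          · rintro ⟨h1, h2⟩
            exact ⟨h1, Or.inr h2⟩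
        · intro e he1 he2
          have hee : e ≠ e₀ := fun hh => he₀s' (hh ▸ (Finset.mem_of_mem_inter_right he2))
          simp [extend, hee]
      have hsplit : ∀ c : C, F (extend φ' c) = fu c * (fw c * P) := by
        intro c
        rw [hF]
        simp only
        rw [← Finset.mul_prod_erase Finset.univ _ (Finset.mem_univ u),
          ← Finset.mul_prod_erase (Finset.univ.erase u) _ hwmem]
        congr 1
        · rw [hfu]
          simp only
          rw [claimB u hu c]
        congr 1
        · rw [hfw]
          simp only
          rw [claimB w hw c]
        · refine Finset.prod_congr rfl fun v hv => ?_
          have hv' : v ≠ w ∧ v ≠ u := by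
            rcases Finset.mem_erase.mp hv with ⟨h1, h2⟩
            exact ⟨h1, (Finset.mem_erase.mp h2).1⟩
          have hvne : v ∉ ends e₀ := by
            rw [hmem]
            rintro (rfl | rfl)
            · exact hv'.2 rfl
            · exact hv'.1 rfl
          rw [hG]
          simp only
          rw [claimA v hvne c]
      have hpow : ∀ x : ℝ≥0∞, (x ^ (1/2 : ℝ)) ^ (2 : ℕ) = x := by
        intro x
        rw [← ENNReal.rpow_natCast (x ^ (1/2:ℝ)) 2, ← ENNReal.rpow_mul]
        norm_num
      calc ∑' c : C, F (extend φ' c) = ∑' c : C, (fu c * fw c) * P := by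
            refine tsum_congr fun c => ?_
            rw [hsplit c, mul_assoc]
        _ = (∑' c : C, fu c * fw c) * P := ENNReal.tsum_mul_right
        _ ≤ ((∑' c : C, fu c ^ (2:ℕ)) ^ (1/2:ℝ) * (∑' c : C, fw c ^ (2:ℕ)) ^ (1/2:ℝ)) * P := by
            refine mul_le_mul_left ?_ P
            exact tsum_mul_le_sqrt fu fw
        _ = (G u φ' * G w φ') * P := by
            congr 2
            · rw [hG]
              simp only
              congr 1
              calc ∑' c : C, fu c ^ (2:ℕ)
                  = ∑' c : C, q h u (insert e₀ (I u ∩ s')) (hsub1 u hu)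
                      (extend (fun e => φ' ⟨(e : E), Finset.mem_of_mem_inter_right e.2⟩) c) := by
                    refine tsum_congr fun c => ?_
                    rw [hfu]
                    simp only
                    rw [hpow]
                _ = _ := q_extend h u (hinv u) (fun hh => he₀s' (Finset.mem_of_mem_inter_right hh))
                      (hsub1 u hu) (hsub u) _
            · rw [hG]
              simp only
              congr 1
              calc ∑' c : C, fw c ^ (2:ℕ)
                  = ∑' c : C, q h w (insert e₀ (I w ∩ s')) (hsub1 w hw)
                      (extend (fun e => φ' ⟨(e : E), Finset.mem_of_mem_inter_right e.2⟩) c) := by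
                    refine tsum_congr fun c => ?_
                    rw [hfw]
                    simp only
                    rw [hpow]
                _ = _ := q_extend h w (hinv w) (fun hh => he₀s' (Finset.mem_of_mem_inter_right hh))
                      (hsub1 w hw) (hsub w) _
        _ = ∏ v : Fin n, G v φ' := by
            rw [mul_assoc, hP,
              Finset.mul_prod_erase (Finset.univ.erase u) (fun v => G v φ') hwmem,
              Finset.mul_prod_erase Finset.univ (fun v => G v φ') (Finset.mem_univ u)]
    calc ∑' φ : (↥(insert e₀ s') → C), F φ
        = ∑' p : (↥s' → C) × C, F (Φ.symm p) := (Equiv.tsum_eq Φ.symm F).symm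
      _ = ∑' (φ' : ↥s' → C) (c : C), F (extend φ' c) :=
          ENNReal.tsum_prod' (f := fun p => F (Φ.symm p))
      _ ≤ ∑' φ' : ↥s' → C, ∏ v : Fin n, G v φ' := ENNReal.tsum_le_tsum fun φ' => key φ'
      _ ≤ ∏ v : Fin n, ENNReal.ofReal (‖h v‖ ^ 2) ^ (1/2 : ℝ) := ih

end Graph

lemma rpow_half_sq (y : ℝ≥0∞) : (y ^ (2:ℕ)) ^ (1/2 : ℝ) = y := by
  rw [← ENNReal.rpow_natCast y 2, ← ENNReal.rpow_mul]
  norm_num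

end Stmt10

theorem stmt10 (C : Type) (n : ℕ) (k : Fin n → ℕ)
    (h : ∀ i : Fin n, Hk C (k i)) (hinv : ∀ i, SkInv (h i))
    (E : Type) [Fintype E] (ends : E → Sym2 (Fin n)) (hloopless : ∀ e, ¬ (ends e).IsDiag)
    (d : Fin n → ℕ) (δ : ∀ v : Fin n, Fin (d v) → E)
    (hinj : ∀ v, Function.Injective (δ v))
    (hrange : ∀ (v : Fin n) (e : E), v ∈ ends e ↔ e ∈ Set.range (δ v))
    (hdeg : ∀ v, d v ≤ k v) :
    Summable (fun φ : E → C => ∏ v : Fin n, sliceNorm (h v) (hdeg v) (fun i => φ (δ v i))) ∧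
    ∑' φ : E → C, ∏ v : Fin n, sliceNorm (h v) (hdeg v) (fun i => φ (δ v i)) ≤
      ∏ v : Fin n, ‖h v‖ := by
  classical
  set Fr : (E → C) → ℝ := fun φ => ∏ v : Fin n, sliceNorm (h v) (hdeg v) (fun i => φ (δ v i))
    with hFr
  have hFrnonneg : ∀ φ, 0 ≤ Fr φ :=
    fun φ => Finset.prod_nonneg fun v _ => Real.sqrt_nonneg _
  set I : Fin n → Finset E := fun v => Finset.univ.filter (fun e => v ∈ ends e) with hIdef
  have hI : ∀ v e, e ∈ I v ↔ v ∈ ends e := by intro v e; simp [hIdef]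
  obtain ⟨eδ, heδ⟩ : ∃ eδ : ∀ v, Fin (d v) ≃ ↥(I v),
      ∀ v j, ((eδ v j : ↥(I v)) : E) = δ v j :=
    ⟨fun v => Equiv.ofBijective
      (fun i => ⟨δ v i, (hI v _).mpr ((hrange v _).mpr ⟨i, rfl⟩)⟩)
      ⟨fun i j hij => hinj v (Subtype.ext_iff.mp hij), fun e => by
        obtain ⟨i, hi⟩ := (hrange v e).mp ((hI v e).mp e.2)
        exact ⟨i, Subtype.ext hi⟩⟩, fun v j => rfl⟩
  have hcardI : ∀ v, (I v).card = d v := by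
    intro v
    have := Fintype.card_congr (eδ v)
    simpa [Fintype.card_coe] using this.symm
  have hIk : ∀ v, (I v).card ≤ k v := fun v => (hcardI v) ▸ hdeg v
  have hmain := Stmt10.main h hinv ends hloopless I hI hIk Finset.univ
  -- reindex the tsum
  let e1 : ↥(Finset.univ : Finset E) ≃ E := Equiv.subtypeUnivEquiv (fun e => Finset.mem_univ e)
  let eU : (↥(Finset.univ : Finset E) → C) ≃ (E → C) :=
    Equiv.arrowCongr e1 (Equiv.refl C)
  set S : (↥(Finset.univ : Finset E) → C) → ℝ≥0∞ := fun φu => ∏ v : Fin n,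
      (Stmt10.q h v (I v ∩ Finset.univ)
        (le_trans (Finset.card_le_card Finset.inter_subset_left) (hIk v))
        (fun e => φu ⟨(e : E), Finset.mem_of_mem_inter_right e.2⟩)) ^ (1/2 : ℝ) with hS
  have hstep : ∀ φ : E → C, ENNReal.ofReal (Fr φ) = S (eU.symm φ) := by
    intro φ
    have hv : ∀ v : Fin n,
        (Stmt10.q h v (I v ∩ Finset.univ)
          (le_trans (Finset.card_le_card Finset.inter_subset_left) (hIk v))
          (fun e => (eU.symm φ) ⟨(e : E), Finset.mem_of_mem_inter_right e.2⟩))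
        = ENNReal.ofReal (sliceNorm (h v) (hdeg v) (fun i => φ (δ v i)) ^ 2) := by
      intro v
      have step1 : (Stmt10.q h v (I v ∩ Finset.univ)
          (le_trans (Finset.card_le_card Finset.inter_subset_left) (hIk v))
          (fun e => (eU.symm φ) ⟨(e : E), Finset.mem_of_mem_inter_right e.2⟩))
          = Stmt10.q h v (I v) (hIk v) (fun e => φ (e : E)) := by
        refine Stmt10.q_congr h v (Finset.inter_univ _) ?_
        intro e he1 he2
        rfl
      rw [step1]
      have step2 : Stmt10.q h v (I v) (hIk v) (fun e => φ (e : E))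
          = Stmt10.Q (h v) (hdeg v) (fun i => φ (δ v i)) := by
        rw [Stmt10.q]
        have := Stmt10.Q_reindex (hinv v) ((eδ v).trans (I v).equivFin) (hdeg v) (hIk v)
          (fun i => φ ((I v).equivFin.symm i))
        rw [← this]
        congr 1
        funext j
        simp [heδ]
      rw [step2, Stmt10.Q_eq]
    rw [hS]
    simp only
    calc ENNReal.ofReal (Fr φ)
        = ∏ v : Fin n, ENNReal.ofReal (sliceNorm (h v) (hdeg v) (fun i => φ (δ v i))) := by
          rw [hFr]
          exact ENNReal.ofReal_prod_of_nonneg (fun v _ => Real.sqrt_nonneg _)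
      _ = _ := by
          refine Finset.prod_congr rfl fun v _ => ?_
          rw [hv v, ENNReal.ofReal_pow
            (show (0:ℝ) ≤ sliceNorm (h v) (hdeg v) (fun i => φ (δ v i)) from Real.sqrt_nonneg _),
            Stmt10.rpow_half_sq]
  have hRHS : ∏ v : Fin n, ENNReal.ofReal (‖h v‖ ^ 2) ^ (1/2 : ℝ)
      = ENNReal.ofReal (∏ v : Fin n, ‖h v‖) := by
    rw [ENNReal.ofReal_prod_of_nonneg (fun v _ => norm_nonneg _)]
    refine Finset.prod_congr rfl fun v _ => ?_
    rw [ENNReal.ofReal_pow (norm_nonneg _), Stmt10.rpow_half_sq]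
  have hkey : ∑' φ : E → C, ENNReal.ofReal (Fr φ) ≤ ENNReal.ofReal (∏ v : Fin n, ‖h v‖) := by
    calc ∑' φ : E → C, ENNReal.ofReal (Fr φ)
        = ∑' φ : E → C, S (eU.symm φ) := tsum_congr fun φ => hstep φ
      _ = ∑' φu : ↥(Finset.univ : Finset E) → C, S φu := (Equiv.tsum_eq eU.symm S)
      _ ≤ ∏ v : Fin n, ENNReal.ofReal (‖h v‖ ^ 2) ^ (1/2 : ℝ) := hmain
      _ = ENNReal.ofReal (∏ v : Fin n, ‖h v‖) := hRHS
  have hne_top : ∑' φ : E → C, ENNReal.ofReal (Fr φ) ≠ ∞ :=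
    ne_top_of_le_ne_top ENNReal.ofReal_ne_top hkey
  have hsummable : Summable Fr := by
    have := ENNReal.summable_toReal hne_top
    refine this.congr fun φ => ?_
    rw [ENNReal.toReal_ofReal (hFrnonneg φ)]
  refine ⟨hsummable, ?_⟩
  have h1 : ∑' φ : E → C, Fr φ = (∑' φ : E → C, ENNReal.ofReal (Fr φ)).toReal := by
    rw [ENNReal.tsum_toReal_eq (fun φ => ENNReal.ofReal_ne_top)]
    exact tsum_congr fun φ => (ENNReal.toReal_ofReal (hFrnonneg φ)).symm
  calc ∑' φ : E → C, Fr φ = (∑' φ : E → C, ENNReal.ofReal (Fr φ)).toReal := h1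
    _ ≤ (ENNReal.ofReal (∏ v : Fin n, ‖h v‖)).toReal :=
        ENNReal.toReal_mono ENNReal.ofReal_ne_top hkey
    _ = ∏ v : Fin n, ‖h v‖ :=
        ENNReal.toReal_ofReal (Finset.prod_nonneg fun v _ => norm_nonneg _)
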